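/- For every real u with |u| < 1/√β_t, the rescaled function B̂(u) := B(u/√τ, τ) satisfies, as τ → 0+, B̂(u) = u²/2 + B̂₁(u)·√τ + O(τ), where B̂₁(u) := (u/4)(u²ρξ − 2). -/

import Mathlib

open Filter Topology Asymptotics MeasureTheory

set_option linter.unusedVariables false

noncomputable section


/-- sign convention of the paper: 1 if `0 ≤ x`, -1 otherwise. -/
def sgn' (x : ℝ) : ℝ := if 0 ≤ x then 1 else -1

/-- principal-branch complex square root `d` of the Heston Riccati discriminant. -/
def hestD (κ ρ ξ : ℝ) (w : ℂ) : ℂ :=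
  (((κ : ℂ) - (ρ : ℂ) * (ξ : ℂ) * w) ^ 2 + w * (1 - w) * (ξ : ℂ) ^ 2) ^ ((1 : ℂ) / 2)

def hestGamma (κ ρ ξ : ℝ) (w : ℂ) : ℂ :=
  ((κ : ℂ) - (ρ : ℂ) * (ξ : ℂ) * w - hestD κ ρ ξ w) /
    ((κ : ℂ) - (ρ : ℂ) * (ξ : ℂ) * w + hestD κ ρ ξ w)

def hestB (κ ρ ξ : ℝ) (w : ℂ) (τ : ℝ) : ℂ :=
  (((κ : ℂ) - (ρ : ℂ) * (ξ : ℂ) * w - hestD κ ρ ξ w) / (ξ : ℂ) ^ 2) *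
    ((1 - Complex.exp (-(hestD κ ρ ξ w) * (τ : ℂ))) /
      (1 - hestGamma κ ρ ξ w * Complex.exp (-(hestD κ ρ ξ w) * (τ : ℂ))))

def hestA (κ θ ρ ξ : ℝ) (w : ℂ) (τ : ℝ) : ℂ :=
  ((κ * θ / ξ ^ 2 : ℝ) : ℂ) *
    (((κ : ℂ) - (ρ : ℂ) * (ξ : ℂ) * w - hestD κ ρ ξ w) * (τ : ℂ) -
      2 * Complex.log ((1 - hestGamma κ ρ ξ w * Complex.exp (-(hestD κ ρ ξ w) * (τ : ℂ))) /
        (1 - hestGamma κ ρ ξ w)))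

def betaT (κ ξ t : ℝ) : ℝ := ξ ^ 2 * (1 - Real.exp (-(κ * t))) / (4 * κ)

/-- explicit Heston forward log-mgf `G_τ(w)`. -/
def hestG (κ θ ξ v ρ t : ℝ) (w : ℂ) (τ : ℝ) : ℂ :=
  hestA κ θ ρ ξ w τ +
    hestB κ ρ ξ w τ * (v : ℂ) * ((Real.exp (-(κ * t)) : ℝ) : ℂ) /
      (1 - 2 * (betaT κ ξ t : ℂ) * hestB κ ρ ξ w τ) -
    ((2 * κ * θ / ξ ^ 2 : ℝ) : ℂ) *
      Complex.log (1 - 2 * (betaT κ ξ t : ℂ) * hestB κ ρ ξ w τ)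

/-- rescaled forward log-mgf, for complex argument. -/
def hestLambdaC (κ θ ξ v ρ t τ : ℝ) (z : ℂ) : ℂ :=
  ((Real.sqrt τ : ℝ) : ℂ) * hestG κ θ ξ v ρ t (z / ((Real.sqrt τ : ℝ) : ℂ)) τ

/-- rescaled forward log-mgf `Λ_τ(u) = √τ · G_τ(u/√τ)`. -/
def hestLambda (κ θ ξ v ρ t τ : ℝ) (u : ℝ) : ℂ :=
  hestLambdaC κ θ ξ v ρ t τ (u : ℂ)

/-- `D_{t,τ}`: the maximal open interval containing `0` on which `Λ_τ` is real-valued. -/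
def hestDom (κ θ ξ v ρ t τ : ℝ) : Set ℝ :=
  connectedComponentIn (interior {u : ℝ | (hestLambda κ θ ξ v ρ t τ u).im = 0}) 0


def B1hat (ρ ξ u : ℝ) : ℝ := u / 4 * (u ^ 2 * ρ * ξ - 2)

lemma cpow_half_neg (x : ℝ) (hx : x < 0) :
    (x:ℂ) ^ ((1:ℂ)/2) = (Real.sqrt (-x) : ℂ) * Complex.I := by
  rw [Complex.ofReal_cpow_of_nonpos hx.le]
  have h2 : ((1:ℂ)/2) = ((1/2:ℝ):ℂ) := by norm_num
  have h1 : (-(x:ℂ)) ^ ((1:ℂ)/2) = ((Real.sqrt (-x) : ℝ):ℂ) := by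
    rw [← Complex.ofReal_neg, h2, ← Complex.ofReal_cpow (by linarith), Real.sqrt_eq_rpow]
  have h3 : Complex.exp (↑Real.pi * Complex.I * ((1:ℂ)/2)) = Complex.I := by
    have : (↑Real.pi * Complex.I * ((1:ℂ)/2)) = ((Real.pi/2 : ℝ):ℂ) * Complex.I := by
      push_cast; ring
    rw [this, Complex.exp_mul_I, ← Complex.ofReal_cos, ← Complex.ofReal_sin,
      Real.cos_pi_div_two, Real.sin_pi_div_two]
    simp
  rw [h1, h3]

lemma hestD_eq (κ ξ ρ u s rr : ℝ) (hs : 0 < s) (hrr : 0 < rr)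
    (hr2 : rr^2 = (1-ρ^2)*ξ^2*u^2 - ξ*u*(ξ-2*κ*ρ)*s - κ^2*s^2) :
    hestD κ ρ ξ ((u:ℂ)/(s:ℂ)) = ((rr/s:ℝ):ℂ) * Complex.I := by
  have hsC : (s:ℂ) ≠ 0 := by exact_mod_cast hs.ne'
  have hrC : ((rr:ℝ):ℂ)^2 = (((1-ρ^2)*ξ^2*u^2 - ξ*u*(ξ-2*κ*ρ)*s - κ^2*s^2 : ℝ):ℂ) := by
    exact_mod_cast congrArg (fun x : ℝ => (x:ℂ)) hr2
  push_cast at hrC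
  have hneg : (-(rr^2)/s^2 : ℝ) < 0 := by
    apply div_neg_of_neg_of_pos (by nlinarith) (by positivity)
  have hbase : ((κ:ℂ) - (ρ:ℂ)*(ξ:ℂ)*((u:ℂ)/(s:ℂ)))^2 + ((u:ℂ)/(s:ℂ))*(1-(u:ℂ)/(s:ℂ))*(ξ:ℂ)^2
      = ((-(rr^2)/s^2 : ℝ):ℂ) := by
    push_cast
    field_simp
    linear_combination hrC
  unfold hestD
  rw [hbase, cpow_half_neg _ hneg]
  congr 2
  rw [neg_div, neg_neg]
  rw [show (rr^2/s^2 : ℝ) = (rr/s)^2 by ring, Real.sqrt_sq (by positivity)]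

lemma hestB_eq (κ ξ ρ u s rr : ℝ) (hξ : ξ ≠ 0) (hs : 0 < s) (hrr : 0 < rr)
    (hr2 : rr^2 = (1-ρ^2)*ξ^2*u^2 - ξ*u*(ξ-2*κ*ρ)*s - κ^2*s^2)
    (E Φ Dn : ℂ) (hE : E = Complex.exp (-(((s*rr:ℝ):ℂ) * Complex.I)))
    (hΦ : Φ = (1 - E) / (((s*rr:ℝ):ℂ) * Complex.I))
    (hDnd : Dn = (s:ℂ) * ((κ*s - ρ*ξ*u:ℝ):ℂ) * Φ + (1 + E)) (hDn0 : Dn ≠ 0) :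
    hestB κ ρ ξ ((u:ℂ)/(s:ℂ)) (s^2) = (u:ℂ) * ((u:ℂ) - (s:ℂ)) * Φ / Dn := by
  have hsC : (s:ℂ) ≠ 0 := by exact_mod_cast hs.ne'
  have hrC : ((rr:ℝ):ℂ)^2 = (((1-ρ^2)*ξ^2*u^2 - ξ*u*(ξ-2*κ*ρ)*s - κ^2*s^2 : ℝ):ℂ) := by
    exact_mod_cast congrArg (fun x : ℝ => (x:ℂ)) hr2
  push_cast at hrC
  have hξC : (ξ:ℂ) ≠ 0 := by exact_mod_cast hξ
  set δ : ℂ := ((s*rr:ℝ):ℂ) * Complex.I with hδdef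
  have hδ0 : δ ≠ 0 := by
    simp only [hδdef]
    exact mul_ne_zero (by exact_mod_cast (mul_pos hs hrr).ne') Complex.I_ne_zero
  have hd : hestD κ ρ ξ ((u:ℂ)/(s:ℂ)) = ((rr/s:ℝ):ℂ) * Complex.I :=
    hestD_eq κ ξ ρ u s rr hs hrr hr2
  set c : ℂ := (κ:ℂ) - (ρ:ℂ)*(ξ:ℂ)*((u:ℂ)/(s:ℂ)) with hcdef
  set dd : ℂ := ((rr/s:ℝ):ℂ) * Complex.I with hdddef
  have hcd : c + dd ≠ 0 := by
    intro h
    have him : (c + dd).im = rr/s := by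
      have hc : c = ((κ - ρ*ξ*(u/s) : ℝ):ℂ) := by rw [hcdef]; push_cast; ring
      rw [hc, hdddef]
      simp
    rw [h] at him
    have : (0:ℝ) < rr/s := by positivity
    simp at him
    linarith
  have hexp : Complex.exp (-(hestD κ ρ ξ ((u:ℂ)/(s:ℂ))) * ((s^2:ℝ):ℂ)) = E := by
    have harg : -(((rr/s:ℝ):ℂ) * Complex.I) * ((s^2:ℝ):ℂ) = -(((s*rr:ℝ):ℂ) * Complex.I) := by
      push_cast
      field_simp
    rw [hd, harg, hE]
  have hrrC : (rr:ℂ) ≠ 0 := by exact_mod_cast hrr.ne'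
  have hden2 : (s:ℂ)^2 * (c * (1 - E) + dd * (1 + E)) = δ * Dn := by
    rw [hDnd, hΦ, hδdef, hcdef, hdddef]
    push_cast
    field_simp [Complex.I_ne_zero, hrrC]
  have hdd2 : dd * dd = -((rr:ℂ)^2/(s:ℂ)^2) := by
    rw [hdddef]
    push_cast
    linear_combination ((rr:ℂ)^2/(s:ℂ)^2) * Complex.I_sq
  have hprod : (c - dd) * (c + dd) * (s:ℂ)^2 = (u:ℂ) * ((u:ℂ) - (s:ℂ)) * (ξ:ℂ)^2 := by
    have h1 : (c - dd) * (c + dd) * (s:ℂ)^2 = (c * c - dd * dd) * (s:ℂ)^2 := by ring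
    rw [h1, hdd2, hcdef]
    push_cast
    field_simp
    linear_combination hrC
  have hgam : 1 - hestGamma κ ρ ξ ((u:ℂ)/(s:ℂ)) * E = δ * Dn / ((s:ℂ)^2 * (c + dd)) := by
    unfold hestGamma
    rw [hd, ← hcdef, ← hden2]
    field_simp
    ring
  have gen : ∀ (a b x y z : ℂ), b ≠ 0 → y ≠ 0 → z ≠ 0 → (a/b)*(x/(y/z)) = a*x*z/(b*y) := by
    intro a b x y z hb hy hz
    field_simp
  have gen2 : ∀ (p q d1 d2 : ℂ), p*(q/d1)/d2 = p*q/(d1*d2) := by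
    intro p q d1 d2
    rw [mul_div_assoc', div_div]
  have hδDn : δ * Dn ≠ 0 := mul_ne_zero hδ0 hDn0
  have hs2cd : (s:ℂ)^2 * (c + dd) ≠ 0 := mul_ne_zero (pow_ne_zero 2 hsC) hcd
  have hξ2 : (ξ:ℂ)^2 ≠ 0 := pow_ne_zero 2 hξC
  unfold hestB
  rw [hexp, hgam, hd, ← hcdef, hΦ]
  rw [gen _ _ _ _ _ hξ2 hδDn hs2cd, gen2]
  rw [div_eq_div_iff (mul_ne_zero hξ2 hδDn) hδDn]
  linear_combination ((1-E) * (δ * Dn)) * hprod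

lemma hestB_asymp (κ ξ ρ u : ℝ) (hκ : 0 < κ) (hξ : 0 < ξ)
    (hρ1 : -1 < ρ) (hρ2 : ρ < 1) (hu : u ≠ 0) :
    (fun s : ℝ => hestB κ ρ ξ ((u:ℂ)/(s:ℂ)) (s^2)
        - (((u^2/2 : ℝ):ℂ) + ((B1hat ρ ξ u : ℝ):ℂ) * (s:ℂ)))
      =O[𝓝[>] (0:ℝ)] fun s => s^2 := by
  set l := 𝓝[>] (0:ℝ) with hl
  set a : ℝ := u^2/2 with ha
  set b : ℝ := B1hat ρ ξ u with hb
  set P : ℝ → ℝ := fun s => (1-ρ^2)*ξ^2*u^2 - ξ*u*(ξ-2*κ*ρ)*s - κ^2*s^2 with hP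
  set r : ℝ → ℝ := fun s => Real.sqrt (P s) with hr
  set δ : ℝ → ℂ := fun s => ((s * r s : ℝ):ℂ) * Complex.I with hδ
  set E : ℝ → ℂ := fun s => Complex.exp (-δ s) with hEd
  set Φ : ℝ → ℂ := fun s => (1 - E s) / δ s with hΦd
  set Dn : ℝ → ℂ := fun s => (s:ℂ) * ((κ*s - ρ*ξ*u:ℝ):ℂ) * Φ s + (1 + E s) with hDnd
  set e1 : ℝ → ℂ := fun s => Φ s - (1 - δ s / 2) with he1d
  set e3 : ℝ → ℂ := fun s => (1 + E s) - (2 - δ s) with he3d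
  have hρsq : 0 < 1 - ρ^2 := by nlinarith
  have hP0 : 0 < (1-ρ^2)*ξ^2*u^2 := by positivity
  have hPc : Continuous P := by fun_prop
  have hrc : Continuous r := Real.continuous_sqrt.comp hPc
  have hP00 : P 0 = (1-ρ^2)*ξ^2*u^2 := by simp [hP]
  have hst : Tendsto (fun s:ℝ => s) l (𝓝 0) := tendsto_id.mono_left nhdsWithin_le_nhds
  have hPev : ∀ᶠ s in l, 0 < P s :=
    (((hPc.tendsto 0).eventually (eventually_gt_nhds (by rw [hP00]; exact hP0))).filter_mono
      nhdsWithin_le_nhds)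
  have hspos : ∀ᶠ s in l, 0 < s := eventually_mem_nhdsWithin
  set R : ℝ := Real.sqrt ((1-ρ^2)*ξ^2*u^2) + 1 with hR
  have hrev : ∀ᶠ s in l, |r s| ≤ R := by
    have h1 : Tendsto r l (𝓝 (Real.sqrt ((1-ρ^2)*ξ^2*u^2))) := by
      have := (hrc.tendsto 0).mono_left (nhdsWithin_le_nhds (s := Set.Ioi (0:ℝ)))
      simpa [hr, hP00] using this
    filter_upwards [h1.eventually (eventually_lt_nhds (show Real.sqrt ((1-ρ^2)*ξ^2*u^2) < R by rw [hR]; linarith))] with s hs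
    rw [abs_of_nonneg (Real.sqrt_nonneg _)]
    exact hs.le
  have hδO : δ =O[l] fun s => s := by
    rw [Asymptotics.isBigO_iff]
    refine ⟨R, ?_⟩
    filter_upwards [hrev] with s h1
    have : ‖δ s‖ = |s| * |r s| := by
      simp [hδ, abs_mul]
    rw [this]
    have : |s| * |r s| ≤ |s| * R := by
      apply mul_le_mul_of_nonneg_left h1 (abs_nonneg s)
    simpa [mul_comm] using this
  have hδt : Tendsto δ l (𝓝 0) := hδO.trans_tendsto hst
  have hδnorm : ∀ᶠ s in l, ‖δ s‖ ≤ 1 := by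
    have := hδt.norm
    simp only [norm_zero] at this
    exact this.eventually (eventually_le_nhds one_pos)
  have hδne : ∀ᶠ s in l, δ s ≠ 0 := by
    filter_upwards [hspos, hPev] with s h1 h2
    have hrpos : 0 < r s := Real.sqrt_pos.mpr h2
    simp only [hδ]
    exact mul_ne_zero (by exact_mod_cast (mul_pos h1 hrpos).ne') Complex.I_ne_zero
  have hEt : Tendsto E l (𝓝 1) := by
    have h1 : Tendsto (fun s => -δ s) l (𝓝 (-0)) := hδt.neg
    have := (Complex.continuous_exp.tendsto (-0:ℂ)).comp h1
    simp at this
    exact this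
  -- bound on e3
  have he3 : ∀ᶠ s in l, ‖e3 s‖ ≤ ‖δ s‖^2 := by
    filter_upwards [hδnorm] with s h1
    have hb2 := Complex.exp_bound (x := -δ s) (by simpa using h1) (n := 2) (by norm_num)
    have hsum : ∑ m ∈ Finset.range 2, (-δ s) ^ m / m.factorial = 1 - δ s := by
      simp [Finset.sum_range_succ]
      ring
    rw [hsum] at hb2
    have he3e : e3 s = Complex.exp (-δ s) - (1 - δ s) := by
      simp only [he3d, hEd]
      ring
    rw [he3e]
    calc ‖Complex.exp (-δ s) - (1 - δ s)‖ = ‖Complex.exp (-δ s) - (1 - δ s)‖ := rfl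
      _ ≤ ‖-δ s‖ ^ 2 * ((2+1 : ℕ) * ((2:ℕ).factorial * (2:ℕ) : ℝ)⁻¹) := hb2
      _ ≤ ‖-δ s‖ ^ 2 * 1 := by gcongr; norm_num [Nat.factorial]
      _ = ‖δ s‖^2 := by simp
  -- bound on e1
  have he1 : ∀ᶠ s in l, ‖e1 s‖ ≤ ‖δ s‖^2 := by
    filter_upwards [hδnorm, hδne] with s h1 h2
    have hb3 := Complex.exp_bound (x := -δ s) (by simpa using h1) (n := 3) (by norm_num)
    have hsum : ∑ m ∈ Finset.range 3, (-δ s) ^ m / m.factorial = 1 - δ s + δ s^2/2 := by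
      simp [Finset.sum_range_succ]
      ring
    rw [hsum] at hb3
    have he1e : e1 s = -(Complex.exp (-δ s) - (1 - δ s + δ s^2/2)) / δ s := by
      simp only [he1d, hΦd, hEd]
      field_simp
      ring
    rw [he1e]
    rw [norm_div, norm_neg]
    rw [div_le_iff₀ (norm_pos_iff.mpr h2)]
    calc ‖Complex.exp (-δ s) - (1 - δ s + δ s^2/2)‖
        ≤ ‖-δ s‖ ^ 3 * ((3+1 : ℕ) * ((3:ℕ).factorial * (3:ℕ) : ℝ)⁻¹) := hb3
      _ ≤ ‖-δ s‖ ^ 3 * 1 := by gcongr; norm_num [Nat.factorial]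
      _ = ‖δ s‖^2 * ‖δ s‖ := by
          simp only [norm_neg, mul_one]
          ring
  have hδsqO : (fun s => ‖δ s‖^2) =O[l] fun s => s^2 := by
    have := (hδO.norm_left).pow 2
    simpa using this
  have he1O : e1 =O[l] fun s => s^2 := by
    refine (Asymptotics.isBigO_iff.mpr ⟨1, ?_⟩).trans hδsqO
    filter_upwards [he1] with s hs
    simpa using hs
  have he3O : e3 =O[l] fun s => s^2 := by
    refine (Asymptotics.isBigO_iff.mpr ⟨1, ?_⟩).trans hδsqO
    filter_upwards [he3] with s hs
    simpa using hs
  have hs2t : Tendsto (fun s:ℝ => s^2) l (𝓝 0) := by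
    have := hst.pow 2
    simpa using this
  have hΦ1 : Tendsto Φ l (𝓝 1) := by
    have heq : Φ = fun s => (1 - δ s / 2) + e1 s := by
      funext s
      simp only [he1d]
      ring
    rw [heq]
    have t1 : Tendsto (fun s => (1:ℂ) - δ s/2) l (𝓝 (1 - 0/2)) :=
      tendsto_const_nhds.sub (hδt.div_const 2)
    have t2 : Tendsto e1 l (𝓝 0) := he1O.trans_tendsto hs2t
    simpa using t1.add t2
  have hsCt : Tendsto (fun s:ℝ => (s:ℂ)) l (𝓝 0) := by
    have := (Complex.continuous_ofReal.tendsto 0).comp hst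
    simp at this
    exact this
  have hcastt : Tendsto (fun s:ℝ => ((κ*s - ρ*ξ*u:ℝ):ℂ)) l (𝓝 ((-(ρ*ξ*u):ℝ):ℂ)) := by
    have hc : Continuous (fun s:ℝ => ((κ*s - ρ*ξ*u:ℝ):ℂ)) := by fun_prop
    have := (hc.tendsto 0).mono_left (nhdsWithin_le_nhds (s := Set.Ioi (0:ℝ)))
    simpa using this
  have hDnt : Tendsto Dn l (𝓝 2) := by
    have t1 : Tendsto (fun s : ℝ => (s:ℂ) * ((κ*s - ρ*ξ*u:ℝ):ℂ) * Φ s) l (𝓝 (0 * ((-(ρ*ξ*u):ℝ):ℂ) * 1)) :=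
      (hsCt.mul hcastt).mul hΦ1
    have t2 : Tendsto (fun s => (1:ℂ) + E s) l (𝓝 (1 + 1)) := tendsto_const_nhds.add hEt
    have := t1.add t2
    simp only [hDnd]
    norm_num at this ⊢
    exact this
  have hDnne : ∀ᶠ s in l, Dn s ≠ 0 := hDnt.eventually_ne (by norm_num)
  have hDninvO : (fun s => (Dn s)⁻¹) =O[l] (fun _ => (1:ℝ)) :=
    (hDnt.inv₀ (by norm_num)).isBigO_one ℝ
  -- the exact identity
  have hBev : ∀ᶠ s : ℝ in l, hestB κ ρ ξ ((u:ℂ)/(s:ℂ)) (s^2)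
      = (u:ℂ) * ((u:ℂ) - (s:ℂ)) * Φ s / Dn s := by
    filter_upwards [hspos, hPev, hDnne] with s h1 h2 h3
    exact hestB_eq κ ξ ρ u s (r s) hξ.ne' h1 (Real.sqrt_pos.mpr h2)
      (Real.sq_sqrt h2.le) (E s) (Φ s) (Dn s) rfl rfl rfl h3
  -- polynomial identity
  have hpolyC : ∀ s : ℝ, (u:ℂ)*((u:ℂ)-(s:ℂ))
      - (((a:ℝ):ℂ) + ((b:ℝ):ℂ)*(s:ℂ))*((s:ℂ)*((κ*s - ρ*ξ*u:ℝ):ℂ) + 2)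
      = (s:ℂ)^2 * (((b*ρ*ξ*u - a*κ - b*κ*s : ℝ)):ℂ) := by
    intro s
    have hR2 : u*(u-s) - (a + b*s)*(s*(κ*s-ρ*ξ*u) + 2) = s^2*(b*ρ*ξ*u - a*κ - b*κ*s) := by
      simp only [ha, hb, B1hat]
      ring
    have := congrArg (fun x:ℝ => (x:ℂ)) hR2
    push_cast at this ⊢
    linear_combination this
  -- the numerator decomposition
  set Num : ℝ → ℂ := fun s => (1 - δ s/2) * ((s:ℂ)^2 * (((b*ρ*ξ*u - a*κ - b*κ*s : ℝ)):ℂ))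
      + (u:ℂ)*((u:ℂ)-(s:ℂ)) * e1 s
      - (((a:ℝ):ℂ) + ((b:ℝ):ℂ)*(s:ℂ)) * ((s:ℂ)*((κ*s - ρ*ξ*u:ℝ):ℂ) * e1 s + e3 s) with hNumd
  have hNumEq : (fun s : ℝ => hestB κ ρ ξ ((u:ℂ)/(s:ℂ)) (s^2)
        - (((u^2/2 : ℝ):ℂ) + ((B1hat ρ ξ u : ℝ):ℂ) * (s:ℂ)))
      =ᶠ[l] fun s => Num s * (Dn s)⁻¹ := by
    filter_upwards [hBev, hDnne] with s hB hne
    rw [hB]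
    have hΦs : Φ s = (1 - δ s/2) + e1 s := by simp only [he1d]; ring
    have hEs : E s = 1 - δ s + e3 s := by simp only [he3d]; ring
    have h1 : (u:ℂ)*((u:ℂ)-(s:ℂ))*Φ s/Dn s - (((u^2/2 : ℝ):ℂ) + ((B1hat ρ ξ u : ℝ):ℂ)*(s:ℂ))
        = ((u:ℂ)*((u:ℂ)-(s:ℂ))*Φ s - (((a:ℝ):ℂ) + ((b:ℝ):ℂ)*(s:ℂ))*Dn s) * (Dn s)⁻¹ := by
      rw [← ha, ← hb]
      field_simp
    rw [h1]
    have h2 : (u:ℂ)*((u:ℂ)-(s:ℂ))*Φ s - (((a:ℝ):ℂ) + ((b:ℝ):ℂ)*(s:ℂ))*Dn s = Num s := by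
      rw [hNumd]
      simp only [hDnd]
      rw [hΦs, hEs]
      linear_combination (1 - δ s / 2) * hpolyC s
    rw [h2]
  -- big-O of the numerator
  have honeO : (fun s => (1:ℂ) - δ s/2) =O[l] (fun _ => (1:ℝ)) := by
    have : Tendsto (fun s => (1:ℂ) - δ s/2) l (𝓝 (1 - 0/2)) :=
      tendsto_const_nhds.sub (hδt.div_const 2)
    exact this.isBigO_one ℝ
  have hqO : (fun s : ℝ => (((b*ρ*ξ*u - a*κ - b*κ*s : ℝ)):ℂ)) =O[l] (fun _ => (1:ℝ)) := by
    have hc : Continuous (fun s:ℝ => (((b*ρ*ξ*u - a*κ - b*κ*s : ℝ)):ℂ)) := by fun_prop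
    exact ((hc.tendsto 0).mono_left nhdsWithin_le_nhds).isBigO_one ℝ
  have hs2CO : (fun s : ℝ => ((s:ℂ))^2) =O[l] fun s => s^2 := by
    have h1 : (fun s : ℝ => (s:ℂ)) =O[l] fun s => s :=
      Complex.isBigO_ofReal_left.mpr (Asymptotics.isBigO_refl _ _)
    simpa using h1.pow 2
  have huuO : (fun s : ℝ => (u:ℂ)*((u:ℂ)-(s:ℂ))) =O[l] (fun _ => (1:ℝ)) := by
    have hc : Continuous (fun s:ℝ => (u:ℂ)*((u:ℂ)-(s:ℂ))) := by fun_prop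
    exact ((hc.tendsto 0).mono_left nhdsWithin_le_nhds).isBigO_one ℝ
  have habO : (fun s : ℝ => ((a:ℝ):ℂ) + ((b:ℝ):ℂ)*(s:ℂ)) =O[l] (fun _ => (1:ℝ)) := by
    have hc : Continuous (fun s:ℝ => ((a:ℝ):ℂ) + ((b:ℝ):ℂ)*(s:ℂ)) := by fun_prop
    exact ((hc.tendsto 0).mono_left nhdsWithin_le_nhds).isBigO_one ℝ
  have hscastO : (fun s : ℝ => (s:ℂ)*((κ*s - ρ*ξ*u:ℝ):ℂ)) =O[l] (fun _ => (1:ℝ)) := by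
    have hc : Continuous (fun s:ℝ => (s:ℂ)*((κ*s - ρ*ξ*u:ℝ):ℂ)) := by fun_prop
    exact ((hc.tendsto 0).mono_left nhdsWithin_le_nhds).isBigO_one ℝ
  have hNumO : Num =O[l] fun s => s^2 := by
    have T1 : (fun s : ℝ => (1 - δ s/2) * ((s:ℂ)^2 * (((b*ρ*ξ*u - a*κ - b*κ*s : ℝ)):ℂ)))
        =O[l] fun s => s^2 := by
      have := honeO.mul (hs2CO.mul hqO)
      simpa using this
    have T2 : (fun s : ℝ => (u:ℂ)*((u:ℂ)-(s:ℂ)) * e1 s) =O[l] fun s => s^2 := by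
      have := huuO.mul he1O
      simpa using this
    have T3 : (fun s : ℝ => (((a:ℝ):ℂ) + ((b:ℝ):ℂ)*(s:ℂ))
        * ((s:ℂ)*((κ*s - ρ*ξ*u:ℝ):ℂ) * e1 s + e3 s)) =O[l] fun s => s^2 := by
      have h1 : (fun s : ℝ => (s:ℂ)*((κ*s - ρ*ξ*u:ℝ):ℂ) * e1 s) =O[l] fun s => s^2 := by
        have := hscastO.mul he1O
        simpa using this
      have := habO.mul (h1.add he3O)
      simpa using this
    rw [hNumd]
    exact (T1.add T2).sub T3
  have := hNumO.mul hDninvO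
  refine hNumEq.trans_isBigO ?_
  simpa using this

theorem stmt9 (κ θ ξ v ρ t : ℝ) (hκ : 0 < κ) (hθ : 0 < θ) (hξ : 0 < ξ)
    (hv : 0 < v) (hρ : ρ ∈ Set.Ioo (-1 : ℝ) 1) (ht : 0 < t)
    (u : ℝ) (hu : |u| < 1 / Real.sqrt (betaT κ ξ t)) :
    (fun τ : ℝ => hestB κ ρ ξ ((u : ℂ) / ((Real.sqrt τ : ℝ) : ℂ)) τ -
        (((u ^ 2 / 2 : ℝ) : ℂ) + ((B1hat ρ ξ u : ℝ) : ℂ) * ((Real.sqrt τ : ℝ) : ℂ)))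
      =O[𝓝[>] (0 : ℝ)] fun τ : ℝ => τ := by
  rcases eq_or_ne u 0 with hu0 | hu0
  · subst hu0
    have hD0 : hestD κ ρ ξ 0 = (κ:ℂ) := by
      unfold hestD
      have h1 : ((κ:ℂ) - (ρ:ℂ)*(ξ:ℂ)*0)^2 + 0*(1-0)*(ξ:ℂ)^2 = ((κ^2 : ℝ):ℂ) := by
        push_cast; ring
      rw [h1]
      have h2 : ((1:ℂ)/2) = (((1/2 : ℝ)):ℂ) := by norm_num
      rw [h2, ← Complex.ofReal_cpow (by positivity)]
      rw [← Real.sqrt_eq_rpow, Real.sqrt_sq hκ.le]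
    have heq : (fun τ : ℝ => hestB κ ρ ξ (((0:ℝ) : ℂ) / ((Real.sqrt τ : ℝ) : ℂ)) τ -
        ((((0:ℝ) ^ 2 / 2 : ℝ) : ℂ) + ((B1hat ρ ξ 0 : ℝ) : ℂ) * ((Real.sqrt τ : ℝ) : ℂ)))
        = fun _ => 0 := by
      funext τ
      have h0 : ((0:ℝ) : ℂ) / ((Real.sqrt τ : ℝ) : ℂ) = 0 := by simp
      rw [h0]
      unfold hestB
      rw [hD0]
      simp [B1hat]
    rw [heq]
    exact Asymptotics.isBigO_zero _ _
  · have key := hestB_asymp κ ξ ρ u hκ hξ hρ.1 hρ.2 hu0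
    have hsq1 : Tendsto Real.sqrt (𝓝[>] (0:ℝ)) (𝓝 0) := by
      have := (Real.continuous_sqrt.tendsto 0).mono_left (nhdsWithin_le_nhds (s := Set.Ioi (0:ℝ)))
      simpa using this
    have hsqrt : Tendsto Real.sqrt (𝓝[>] (0:ℝ)) (𝓝[>] (0:ℝ)) := by
      apply tendsto_nhdsWithin_of_tendsto_nhds_of_eventually_within _ hsq1
      filter_upwards [eventually_mem_nhdsWithin] with τ hτ
      exact Real.sqrt_pos.mpr hτ
    have comp := key.comp_tendsto hsqrt
    have hf : ((fun s : ℝ => hestB κ ρ ξ ((u:ℂ)/(s:ℂ)) (s^2)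
        - (((u^2/2 : ℝ):ℂ) + ((B1hat ρ ξ u : ℝ):ℂ) * (s:ℂ))) ∘ Real.sqrt)
        =ᶠ[𝓝[>] (0:ℝ)] (fun τ : ℝ => hestB κ ρ ξ ((u : ℂ) / ((Real.sqrt τ : ℝ) : ℂ)) τ -
        (((u ^ 2 / 2 : ℝ) : ℂ) + ((B1hat ρ ξ u : ℝ) : ℂ) * ((Real.sqrt τ : ℝ) : ℂ))) := by
      filter_upwards [eventually_mem_nhdsWithin] with τ hτ
      have : Real.sqrt τ ^ 2 = τ := Real.sq_sqrt (le_of_lt hτ)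
      simp only [Function.comp_apply, this]
    have hg : ((fun s : ℝ => s^2) ∘ Real.sqrt) =ᶠ[𝓝[>] (0:ℝ)] (fun τ : ℝ => τ) := by
      filter_upwards [eventually_mem_nhdsWithin] with τ hτ
      exact Real.sq_sqrt (le_of_lt hτ)
    exact comp.congr' hf hg


end
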